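/- Fix integers n ≥ 3 and 2 ≤ k ≤ n−1. Define σ : {1, …, n} → {1, …, n} by σ(1) = n, σ(i) = i + (n−k) for 2 ≤ i ≤ k−1, and σ(i) = i − (k−1) for k ≤ i ≤ n. Then σ is a bijection of {1, …, n}, and the permutation σ is a single n-cycle (equivalently, every orbit of σ is all of {1, …, n}) if and only if gcd(n−k, n−1) = 1. -/

import Mathlib

/-- The permutation `ρ_e(n,k)` of `{1, …, n}` defined by `σ(1) = n`,
`σ(i) = i + (n-k)` for `2 ≤ i ≤ k-1`, and `σ(i) = i - (k-1)` for `k ≤ i ≤ n`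
is a bijection of `{1, …, n}`, and it is a single `n`-cycle (every forward orbit
hits every point) if and only if `gcd(n-k, n-1) = 1`. -/
theorem rho_e_bijective_and_cycle_iff (n k : ℕ) (hn : 3 ≤ n) (hk2 : 2 ≤ k)
    (hkn : k ≤ n - 1) (σ : ℕ → ℕ)
    (hσ1 : σ 1 = n)
    (hσmid : ∀ i, 2 ≤ i → i ≤ k - 1 → σ i = i + (n - k))
    (hσtop : ∀ i, k ≤ i → i ≤ n → σ i = i - (k - 1)) :
    Set.BijOn σ (Set.Icc 1 n) (Set.Icc 1 n) ∧
      ((∀ x ∈ Set.Icc 1 n, ∀ y ∈ Set.Icc 1 n, ∃ j : ℕ, σ^[j] x = y) ↔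
        Nat.gcd (n - k) (n - 1) = 1) := by
  -- key single-step lemma (in residue coordinates `r ↦ r + 2`), valid away from `k`
  have hstep : ∀ r, r + 2 ≤ n → r + 2 ≠ k → σ (r + 2) = (r + (n - k)) % (n - 1) + 2 := by
    intro r hr hrk
    rcases (by omega : r + 2 ≤ k - 1 ∨ k + 1 ≤ r + 2) with h | h
    · rw [hσmid _ (by omega) h, Nat.mod_eq_of_lt (by omega)]
      omega
    · rw [hσtop _ (by omega) hr, Nat.mod_eq_sub_mod (by omega),
        Nat.mod_eq_of_lt (by omega)]
      omega
  have hσk : σ k = 1 := by rw [hσtop k le_rfl (by omega)]; omega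
  constructor
  · refine ⟨?_, ?_, ?_⟩
    · -- MapsTo
      intro x hx
      simp only [Set.mem_Icc] at hx ⊢
      rcases (by omega : x = 1 ∨ (2 ≤ x ∧ x ≤ k - 1) ∨ (k ≤ x ∧ x ≤ n)) with h | h | h
      · rw [h, hσ1]; omega
      · rw [hσmid x h.1 h.2]; omega
      · rw [hσtop x h.1 h.2]; omega
    · -- InjOn
      have key : ∀ x, 1 ≤ x → x ≤ n →
          (x = 1 ∧ σ x = n) ∨ (2 ≤ x ∧ x ≤ k - 1 ∧ σ x = x + (n - k)) ∨
            (k ≤ x ∧ x ≤ n ∧ σ x = x - (k - 1)) := by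
        intro x h1 h2
        rcases (by omega : x = 1 ∨ (2 ≤ x ∧ x ≤ k - 1) ∨ (k ≤ x ∧ x ≤ n)) with h | h | h
        · exact Or.inl ⟨h, by rw [h, hσ1]⟩
        · exact Or.inr (Or.inl ⟨h.1, h.2, hσmid x h.1 h.2⟩)
        · exact Or.inr (Or.inr ⟨h.1, h.2, hσtop x h.1 h.2⟩)
      intro a ha b hb hab
      simp only [Set.mem_Icc] at ha hb
      rcases key a ha.1 ha.2 with h | h | h <;>
        rcases key b hb.1 hb.2 with h' | h' | h' <;> omega
    · -- SurjOn
      intro y hy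
      simp only [Set.mem_Icc] at hy
      simp only [Set.mem_image, Set.mem_Icc]
      rcases (by omega : y = n ∨ (n - k + 2 ≤ y ∧ y ≤ n - 1) ∨ (1 ≤ y ∧ y ≤ n - k + 1))
          with h | h | h
      · exact ⟨1, ⟨le_rfl, by omega⟩, by rw [hσ1, h]⟩
      · refine ⟨y - (n - k), ⟨by omega, by omega⟩, ?_⟩
        rw [hσmid _ (by omega) (by omega)]; omega
      · refine ⟨y + (k - 1), ⟨by omega, by omega⟩, ?_⟩
        rw [hσtop _ (by omega) (by omega)]; omega
  · constructor
    · -- transitive → gcd = 1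
      intro h
      obtain ⟨j, hj⟩ := h 2 (by simp only [Set.mem_Icc]; omega) 3
        (by simp only [Set.mem_Icc]; omega)
      have inv : ∀ j, (σ^[j] 2 = 1 ∧ ∃ t, (t * (n - k)) % (n - 1) = k - 2) ∨
          (∃ t, σ^[j] 2 = (t * (n - k)) % (n - 1) + 2) := by
        intro j
        induction j with
        | zero => exact Or.inr ⟨0, by simp⟩
        | succ j ih =>
          rw [Function.iterate_succ_apply']
          rcases ih with ⟨h1, t, ht⟩ | ⟨t, ht⟩
          · refine Or.inr ⟨t + 1, ?_⟩
            rw [h1, hσ1]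
            have hmm : (t + 1) * (n - k) % (n - 1)
                = (t * (n - k) % (n - 1) + (n - k)) % (n - 1) := by
              rw [Nat.mod_add_mod]; congr 1; ring
            rw [hmm, ht, Nat.mod_eq_of_lt (by omega)]
            omega
          · have hr : t * (n - k) % (n - 1) < n - 1 := Nat.mod_lt _ (by omega)
            rw [ht]
            by_cases hk : t * (n - k) % (n - 1) + 2 = k
            · refine Or.inl ⟨?_, t, by omega⟩
              rw [hk, hσk]
            · refine Or.inr ⟨t + 1, ?_⟩
              rw [hstep _ (by omega) hk]
              have hmm : (t + 1) * (n - k) % (n - 1)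
                  = (t * (n - k) % (n - 1) + (n - k)) % (n - 1) := by
                rw [Nat.mod_add_mod]; congr 1; ring
              rw [hmm]
      rcases inv j with ⟨h1, _⟩ | ⟨t, ht⟩
      · omega
      · have h1 : t * (n - k) % (n - 1) = 1 := by omega
        have hdm : t * (n - k) % (n - 1) = t * (n - k) - (n - 1) * (t * (n - k) / (n - 1)) := by
          have := Nat.div_add_mod (t * (n - k)) (n - 1)
          omega
        have hdvd : Nat.gcd (n - k) (n - 1) ∣ t * (n - k) % (n - 1) := by
          rw [hdm]
          exact Nat.dvd_sub (Dvd.dvd.mul_left (Nat.gcd_dvd_left _ _) t)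
            (Dvd.dvd.mul_right (Nat.gcd_dvd_right _ _) _)
        rw [h1] at hdvd
        exact Nat.dvd_one.mp hdvd
    · -- gcd = 1 → transitive
      intro hg
      -- iterate formula: from any point of `[2,n]` we can follow the rotation
      have reach : ∀ r, r ≤ n - 2 → ∀ j, ∃ t,
          σ^[t] (r + 2) = (r + j * (n - k)) % (n - 1) + 2 := by
        intro r hr j
        induction j with
        | zero =>
          refine ⟨0, ?_⟩
          simp only [Function.iterate_zero_apply, Nat.zero_mul, Nat.add_zero]
          rw [Nat.mod_eq_of_lt (by omega)]
        | succ j ih =>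
          obtain ⟨t, ht⟩ := ih
          have hr'lt : (r + j * (n - k)) % (n - 1) < n - 1 := Nat.mod_lt _ (by omega)
          have hmod : (r + (j + 1) * (n - k)) % (n - 1)
              = ((r + j * (n - k)) % (n - 1) + (n - k)) % (n - 1) := by
            rw [Nat.mod_add_mod]; congr 1; ring
          by_cases hk : (r + j * (n - k)) % (n - 1) + 2 = k
          · refine ⟨2 + t, ?_⟩
            rw [Function.iterate_add_apply, ht]
            show σ (σ ((r + j * (n - k)) % (n - 1) + 2)) = _
            rw [hk, hσk, hσ1, hmod, Nat.mod_eq_of_lt (by omega)]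
            omega
          · refine ⟨1 + t, ?_⟩
            rw [Function.iterate_add_apply, ht]
            show σ ((r + j * (n - k)) % (n - 1) + 2) = _
            rw [hstep _ (by omega) hk, hmod]
      obtain ⟨e, -, he⟩ := Nat.exists_mul_mod_eq_one_of_coprime hg (by omega)
      -- from any point of `[2,n]` every point of `[2,n]` is reachable
      have reach_rs : ∀ r, r ≤ n - 2 → ∀ s, s ≤ n - 2 → ∃ t, σ^[t] (r + 2) = s + 2 := by
        intro r hr s hs
        obtain ⟨t, ht⟩ := reach r hr (e * (s + (n - 1) - r))
        refine ⟨t, ?_⟩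
        rw [ht]
        have hmain : (r + e * (s + (n - 1) - r) * (n - k)) % (n - 1) = s := by
          have h1 : (n - k) * e ≡ 1 [MOD n - 1] := by
            show (n - k) * e % (n - 1) = 1 % (n - 1)
            rw [he, Nat.mod_eq_of_lt (by omega)]
          have h2 : (s + (n - 1) - r) * ((n - k) * e) ≡ (s + (n - 1) - r) * 1 [MOD n - 1] :=
            Nat.ModEq.mul_left _ h1
          have h3 : r + e * (s + (n - 1) - r) * (n - k)
              ≡ r + (s + (n - 1) - r) * 1 [MOD n - 1] := by
            have hre : e * (s + (n - 1) - r) * (n - k) = (s + (n - 1) - r) * ((n - k) * e) := by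
              ring
            rw [hre]
            exact Nat.ModEq.add_left _ h2
          have h4 : r + (s + (n - 1) - r) * 1 = s + (n - 1) := by omega
          rw [h4] at h3
          have h5 : (r + e * (s + (n - 1) - r) * (n - k)) % (n - 1)
              = (s + (n - 1)) % (n - 1) := h3
          rw [h5, Nat.add_mod_right, Nat.mod_eq_of_lt (by omega)]
        rw [hmain]
      intro x hx y hy
      simp only [Set.mem_Icc] at hx hy
      obtain ⟨a, c, hc2, hcn, hac⟩ : ∃ a c, 2 ≤ c ∧ c ≤ n ∧ σ^[a] x = c := by
        rcases eq_or_ne x 1 with h | h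
        · exact ⟨1, n, by omega, le_rfl, by simp [h, hσ1]⟩
        · exact ⟨0, x, by omega, hx.2, rfl⟩
      rcases eq_or_ne y 1 with hy1 | hy1
      · obtain ⟨t, ht⟩ := reach_rs (c - 2) (by omega) (k - 2) (by omega)
        rw [show c - 2 + 2 = c by omega, show k - 2 + 2 = k by omega] at ht
        refine ⟨1 + (t + a), ?_⟩
        rw [Function.iterate_add_apply, Function.iterate_add_apply, hac, ht]
        simp only [Function.iterate_one]
        rw [hσk, hy1]
      · obtain ⟨t, ht⟩ := reach_rs (c - 2) (by omega) (y - 2) (by omega)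
        rw [show c - 2 + 2 = c by omega, show y - 2 + 2 = y by omega] at ht
        refine ⟨t + a, ?_⟩
        rw [Function.iterate_add_apply, hac, ht]
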